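/- Given a rotation group D on a three-dimensional real vector space V and a D-orbit l ⊂ V \ {0} with associated norm ‖·‖_l (defined by ‖λ v‖ = λ for λ ≥ 0 and v ∈ l), the map b(v,w) := ‖v‖² α_v(w)/2 for v ≠ 0 and b(0,w) := 0 is a D-invariant inner product on V satisfying b(v,v) = ‖v‖² for all v. -/

import Mathlib

/-- The ray (half-line) spanned by `v`: all nonnegative multiples of `v`. -/
def Ray' {V : Type*} [AddCommGroup V] [Module ℝ V] (v : V) : Set V :=
  {x | ∃ c : ℝ, 0 ≤ c ∧ x = c • v}

/-- The half-plane `ℝ v + ℝ≥0 w`. -/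
def HalfPlane {V : Type*} [AddCommGroup V] [Module ℝ V] (v w : V) : Set V :=
  {x | ∃ a b : ℝ, 0 ≤ b ∧ x = a • v + b • w}

/-- `D` is a rotation group: for any two pairs of (half-plane, ray on its boundary)
there is exactly one element of `D` mapping the first pair to the second. -/
def IsRotationGroup {V : Type*} [AddCommGroup V] [Module ℝ V]
    (D : Subgroup (V ≃ₗ[ℝ] V)) : Prop :=
  ∀ v w v' w' : V, LinearIndependent ℝ ![v, w] → LinearIndependent ℝ ![v', w'] →
    ∃! d : V ≃ₗ[ℝ] V, d ∈ D ∧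
      (d : V ≃ₗ[ℝ] V) '' HalfPlane v w = HalfPlane v' w' ∧
      (d : V ≃ₗ[ℝ] V) '' Ray' v = Ray' v'

/-- `w ⊥ v` : some rotation sends `w` to `-w` and fixes `v`. -/
def Perp {V : Type*} [AddCommGroup V] [Module ℝ V]
    (D : Subgroup (V ≃ₗ[ℝ] V)) (w v : V) : Prop :=
  ∃ r ∈ D, r w = -w ∧ r v = v


section Aux
variable {V : Type*} [AddCommGroup V] [Module ℝ V]

lemma image_halfPlane (e : V ≃ₗ[ℝ] V) (a b : V) :
    (e : V ≃ₗ[ℝ] V) '' HalfPlane a b = HalfPlane (e a) (e b) := by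
  ext x
  constructor
  · rintro ⟨y, ⟨p, q, hq, rfl⟩, rfl⟩
    exact ⟨p, q, hq, by simp [map_add, map_smul]⟩
  · rintro ⟨p, q, hq, rfl⟩
    exact ⟨p • a + q • b, ⟨p, q, hq, rfl⟩, by simp [map_add, map_smul]⟩

lemma image_ray (e : V ≃ₗ[ℝ] V) (a : V) :
    (e : V ≃ₗ[ℝ] V) '' Ray' a = Ray' (e a) := by
  ext x
  constructor
  · rintro ⟨y, ⟨c, hc, rfl⟩, rfl⟩
    exact ⟨c, hc, by simp [map_smul]⟩
  · rintro ⟨c, hc, rfl⟩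
    exact ⟨c • a, ⟨c, hc, rfl⟩, by simp [map_smul]⟩

lemma halfPlane_smul_left {c : ℝ} (hc : c ≠ 0) (a b : V) :
    HalfPlane (c • a) b = HalfPlane a b := by
  ext x
  constructor
  · rintro ⟨p, q, hq, rfl⟩
    exact ⟨p * c, q, hq, by rw [mul_smul]⟩
  · rintro ⟨p, q, hq, rfl⟩
    exact ⟨p / c, q, hq, by match_scalars <;> field_simp⟩

lemma halfPlane_smul_right {c : ℝ} (hc : 0 < c) (a b : V) :
    HalfPlane a (c • b) = HalfPlane a b := by
  ext x
  constructor
  · rintro ⟨p, q, hq, rfl⟩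
    exact ⟨p, q * c, by positivity, by rw [mul_smul]⟩
  · rintro ⟨p, q, hq, rfl⟩
    exact ⟨p, q / c, by positivity, by match_scalars <;> field_simp⟩

lemma halfPlane_add_smul (a b : V) (t : ℝ) :
    HalfPlane a (b + t • a) = HalfPlane a b := by
  ext x
  constructor
  · rintro ⟨p, q, hq, rfl⟩
    exact ⟨p + q * t, q, hq, by module⟩
  · rintro ⟨p, q, hq, rfl⟩
    exact ⟨p - q * t, q, hq, by module⟩

lemma mem_halfPlane_right (a b : V) : b ∈ HalfPlane a b :=
  ⟨0, 1, zero_le_one, by module⟩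

lemma mem_ray_self (a : V) : a ∈ Ray' a := ⟨1, zero_le_one, (one_smul _ _).symm⟩

lemma li_pair_symm {a b : V} (h : LinearIndependent ℝ ![a, b]) :
    LinearIndependent ℝ ![b, a] := by
  rw [linearIndependent_fin2] at h ⊢
  simp only [Matrix.cons_val_one, Matrix.head_cons, Matrix.cons_val_zero] at h ⊢
  obtain ⟨hb, hab⟩ := h
  have ha : a ≠ 0 := by
    intro h0
    exact hab 0 (by simp [h0])
  refine ⟨ha, fun c hc => ?_⟩
  have hc0 : c ≠ 0 := by
    intro h0; rw [h0, zero_smul] at hc; exact hb hc.symm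
  exact hab c⁻¹ (by rw [← hc, inv_smul_smul₀ hc0])

lemma li_pair_coeffs {a b : V} (h : LinearIndependent ℝ ![a, b]) {p q : ℝ}
    (he : p • a + q • b = 0) : p = 0 ∧ q = 0 := by
  have h2 := Fintype.linearIndependent_iff.mp h ![p, q] (by
    simpa [Fin.sum_univ_two] using he)
  exact ⟨by simpa using h2 0, by simpa using h2 1⟩

lemma li_pair_eq_coeffs {a b : V} (h : LinearIndependent ℝ ![a, b]) {p q p' q' : ℝ}
    (he : p • a + q • b = p' • a + q' • b) : p = p' ∧ q = q' := by
  have : (p - p') • a + (q - q') • b = 0 := by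
    rw [sub_smul, sub_smul]
    rw [← sub_eq_zero] at he
    calc (p • a - p' • a) + (q • b - q' • b) = p • a + q • b - (p' • a + q' • b) := by abel
    _ = 0 := he
  obtain ⟨h1, h2⟩ := li_pair_coeffs h this
  constructor <;> linarith

lemma li_pair_neg_right {a b : V} (h : LinearIndependent ℝ ![a, b]) :
    LinearIndependent ℝ ![a, -b] := by
  rw [linearIndependent_fin2] at h ⊢
  simp only [Matrix.cons_val_one, Matrix.head_cons, Matrix.cons_val_zero] at h ⊢
  obtain ⟨hb, hab⟩ := h
  refine ⟨neg_ne_zero.mpr hb, fun c hc => ?_⟩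
  exact hab (-c) (by rw [← hc]; module)

lemma li_pair_map {a b : V} (h : LinearIndependent ℝ ![a, b]) (e : V ≃ₗ[ℝ] V) :
    LinearIndependent ℝ ![e a, e b] := by
  have : ![e a, e b] = ⇑e ∘ ![a, b] := by
    funext i; fin_cases i <;> simp
  rw [this]
  exact h.map' e.toLinearMap e.ker

end Aux

section Main

variable {V : Type*} [AddCommGroup V] [Module ℝ V]
  {D : Subgroup (V ≃ₗ[ℝ] V)} {r : V → (V ≃ₗ[ℝ] V)} {α : V → (V →ₗ[ℝ] ℝ)}

lemma smul_cancel {c d : ℝ} {m : V} (hm : m ≠ 0) (h : c • m = d • m) : c = d := by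
  have h0 : (c - d) • m = 0 := by rw [sub_smul, h, sub_self]
  rcases smul_eq_zero.mp h0 with h' | h'
  · linarith [sub_eq_zero.mp (by linarith [h'] : c - d = 0)]
  · exact absurd h' hm

lemma rr_apply (hr : ∀ v : V, v ≠ 0 → r v ∈ D ∧ (r v) v = v ∧
      ∀ u : V, Perp D u v → (r v) u = -u)
    (hα : ∀ v : V, v ≠ 0 → ∀ w : V, (r v) w + w = α v w • v)
    {m : V} (hm : m ≠ 0) (z : V) : (r m) z = α m z • m - z :=
  eq_sub_of_add_eq (hα m hm z)

lemma α_self (hr : ∀ v : V, v ≠ 0 → r v ∈ D ∧ (r v) v = v ∧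
      ∀ u : V, Perp D u v → (r v) u = -u)
    (hα : ∀ v : V, v ≠ 0 → ∀ w : V, (r v) w + w = α v w • v)
    {m : V} (hm : m ≠ 0) : α m m = 2 := by
  have h := hα m hm m
  rw [(hr m hm).2.1] at h
  have h2 : (2 : ℝ) • m = α m m • m := by rw [two_smul]; exact h
  exact (smul_cancel hm h2).symm

lemma r_invol (hr : ∀ v : V, v ≠ 0 → r v ∈ D ∧ (r v) v = v ∧
      ∀ u : V, Perp D u v → (r v) u = -u)
    (hα : ∀ v : V, v ≠ 0 → ∀ w : V, (r v) w + w = α v w • v)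
    {m : V} (hm : m ≠ 0) (z : V) : (r m) ((r m) z) = z := by
  rw [rr_apply hr hα hm z, rr_apply hr hα hm _, map_sub, map_smul, α_self hr hα hm]
  simp only [smul_eq_mul]
  module

lemma exists_ker_ne_zero (hdim : Module.finrank ℝ V = 3) (f : V →ₗ[ℝ] ℝ) :
    ∃ u : V, u ≠ 0 ∧ f u = 0 := by
  haveI : FiniteDimensional ℝ V := FiniteDimensional.of_finrank_pos (by rw [hdim]; norm_num)
  by_cases hK : LinearMap.ker f = ⊥
  · have hinj : Function.Injective f := LinearMap.ker_eq_bot.mp hK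
    have := LinearMap.finrank_le_finrank_of_injective hinj
    rw [hdim, Module.finrank_self] at this
    norm_num at this
  · obtain ⟨x, hx, hx0⟩ := Submodule.ne_bot_iff _ |>.mp hK
    exact ⟨x, hx0, hx⟩

lemma exists_ker2_ne_zero (hdim : Module.finrank ℝ V = 3) (f g : V →ₗ[ℝ] ℝ) :
    ∃ u : V, u ≠ 0 ∧ f u = 0 ∧ g u = 0 := by
  haveI : FiniteDimensional ℝ V := FiniteDimensional.of_finrank_pos (by rw [hdim]; norm_num)
  by_cases hK : LinearMap.ker (f.prod g) = ⊥
  · have hinj : Function.Injective (f.prod g) := LinearMap.ker_eq_bot.mp hK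
    have := LinearMap.finrank_le_finrank_of_injective hinj
    rw [hdim, Module.finrank_prod, Module.finrank_self] at this
    norm_num at this
  · obtain ⟨x, hx, hx0⟩ := Submodule.ne_bot_iff _ |>.mp hK
    rw [LinearMap.mem_ker, LinearMap.prod_apply] at hx
    exact ⟨x, hx0, congrArg Prod.fst hx, congrArg Prod.snd hx⟩

lemma r_conj (hdim : Module.finrank ℝ V = 3) (hD : IsRotationGroup D)
    (hr : ∀ v : V, v ≠ 0 → r v ∈ D ∧ (r v) v = v ∧
      ∀ u : V, Perp D u v → (r v) u = -u)
    (hα : ∀ v : V, v ≠ 0 → ∀ w : V, (r v) w + w = α v w • v)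
    {g : V ≃ₗ[ℝ] V} (hg : g ∈ D) {m : V} (hm : m ≠ 0) (z : V) :
    (r (g m)) (g z) = g ((r m) z) := by
  obtain ⟨u₁, hu₁0, hu₁k⟩ := exists_ker_ne_zero hdim (α m)
  have hrm := hr m hm
  have hrmu₁ : (r m) u₁ = -u₁ := by rw [rr_apply hr hα hm, hu₁k, zero_smul, zero_sub]
  have hgm0 : g m ≠ 0 := fun h => hm (g.map_eq_zero_iff.mp h)
  have hIndep : LinearIndependent ℝ ![m, u₁] := by
    rw [linearIndependent_fin2]
    simp only [Matrix.cons_val_one, Matrix.head_cons, Matrix.cons_val_zero]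
    refine ⟨hu₁0, fun a ha => ?_⟩
    have h3 : (α m) (a • u₁) = 2 := by rw [ha]; exact α_self hr hα hm
    rw [map_smul, smul_eq_mul, hu₁k, mul_zero] at h3
    norm_num at h3
  have hI1 := li_pair_map hIndep g
  have hI2 := li_pair_neg_right hI1
  have happ : ∀ z : V, (g * r m * g⁻¹) (g z) = g ((r m) z) := by
    intro z
    show g ((r m) (g.symm (g z))) = g ((r m) z)
    rw [g.symm_apply_apply]
  have hhD : (g * r m * g⁻¹) ∈ D := mul_mem (mul_mem hg hrm.1) (inv_mem hg)
  have hhm : (g * r m * g⁻¹) (g m) = g m := by rw [happ m, hrm.2.1]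
  have hhu : (g * r m * g⁻¹) (g u₁) = -(g u₁) := by rw [happ u₁, hrmu₁, map_neg]
  have hrgm := hr (g m) hgm0
  have hrgmu : (r (g m)) (g u₁) = -(g u₁) :=
    hrgm.2.2 (g u₁) ⟨g * r m * g⁻¹, hhD, hhu, hhm⟩
  obtain ⟨e, -, he⟩ := hD (g m) (g u₁) (g m) (-(g u₁)) hI1 hI2
  have e1 : r (g m) = e := he _ ⟨hrgm.1,
    by rw [image_halfPlane, hrgm.2.1, hrgmu],
    by rw [image_ray, hrgm.2.1]⟩
  have e2 : (g * r m * g⁻¹) = e := he _ ⟨hhD,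
    by rw [image_halfPlane, hhm, hhu],
    by rw [image_ray, hhm]⟩
  calc (r (g m)) (g z) = (g * r m * g⁻¹) (g z) := by rw [e1.trans e2.symm]
  _ = g ((r m) z) := happ z

lemma r_smul_eq (hdim : Module.finrank ℝ V = 3) (hD : IsRotationGroup D)
    (hr : ∀ v : V, v ≠ 0 → r v ∈ D ∧ (r v) v = v ∧
      ∀ u : V, Perp D u v → (r v) u = -u)
    (hα : ∀ v : V, v ≠ 0 → ∀ w : V, (r v) w + w = α v w • v)
    {c : ℝ} (hc : c ≠ 0) {m : V} (hm : m ≠ 0) (z : V) :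
    (r (c • m)) z = (r m) z := by
  obtain ⟨u₁, hu₁0, hu₁k⟩ := exists_ker_ne_zero hdim (α m)
  have hrm := hr m hm
  have hrmu₁ : (r m) u₁ = -u₁ := by rw [rr_apply hr hα hm, hu₁k, zero_smul, zero_sub]
  have hcm0 : c • m ≠ 0 := smul_ne_zero hc hm
  have hIndep : LinearIndependent ℝ ![m, u₁] := by
    rw [linearIndependent_fin2]
    simp only [Matrix.cons_val_one, Matrix.head_cons, Matrix.cons_val_zero]
    refine ⟨hu₁0, fun a ha => ?_⟩
    have h3 : (α m) (a • u₁) = 2 := by rw [ha]; exact α_self hr hα hm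
    rw [map_smul, smul_eq_mul, hu₁k, mul_zero] at h3
    norm_num at h3
  have hI2 := li_pair_neg_right hIndep
  have hrcm := hr (c • m) hcm0
  -- r (c•m) fixes m
  have hfix : (r (c • m)) m = m := by
    have h1 : (r (c • m)) (c • m) = c • m := hrcm.2.1
    rw [map_smul] at h1
    exact smul_right_injective V hc h1
  have hneg : (r (c • m)) u₁ = -u₁ :=
    hrcm.2.2 u₁ ⟨r m, hrm.1, hrmu₁, by rw [map_smul, hrm.2.1]⟩
  obtain ⟨e, -, he⟩ := hD m u₁ m (-u₁) hIndep hI2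
  have e1 : r (c • m) = e := he _ ⟨hrcm.1,
    by rw [image_halfPlane, hfix, hneg],
    by rw [image_ray, hfix]⟩
  have e2 : r m = e := he _ ⟨hrm.1,
    by rw [image_halfPlane, hrm.2.1, hrmu₁],
    by rw [image_ray, hrm.2.1]⟩
  rw [e1.trans e2.symm]

lemma α_conj (hdim : Module.finrank ℝ V = 3) (hD : IsRotationGroup D)
    (hr : ∀ v : V, v ≠ 0 → r v ∈ D ∧ (r v) v = v ∧
      ∀ u : V, Perp D u v → (r v) u = -u)
    (hα : ∀ v : V, v ≠ 0 → ∀ w : V, (r v) w + w = α v w • v)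
    {g : V ≃ₗ[ℝ] V} (hg : g ∈ D) {m : V} (hm : m ≠ 0) (z : V) :
    α (g m) (g z) = α m z := by
  have hgm0 : g m ≠ 0 := fun h => hm (g.map_eq_zero_iff.mp h)
  have h1 := hα (g m) hgm0 (g z)
  rw [r_conj hdim hD hr hα hg hm z] at h1
  have h2 : g ((r m) z + z) = α (g m) (g z) • g m := by rw [map_add]; exact h1
  rw [hα m hm z, map_smul] at h2
  exact (smul_cancel hgm0 h2).symm

lemma α_smul_eq (hdim : Module.finrank ℝ V = 3) (hD : IsRotationGroup D)
    (hr : ∀ v : V, v ≠ 0 → r v ∈ D ∧ (r v) v = v ∧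
      ∀ u : V, Perp D u v → (r v) u = -u)
    (hα : ∀ v : V, v ≠ 0 → ∀ w : V, (r v) w + w = α v w • v)
    {c : ℝ} (hc : c ≠ 0) {m : V} (hm : m ≠ 0) (z : V) :
    α (c • m) z = c⁻¹ * α m z := by
  have hcm0 : c • m ≠ 0 := smul_ne_zero hc hm
  have h1 := hα (c • m) hcm0 z
  rw [r_smul_eq hdim hD hr hα hc hm z, hα m hm z] at h1
  -- h1 : α m z • m = α (c • m) z • c • m
  rw [smul_smul] at h1
  have h2 := smul_cancel hm h1
  field_simp
  linarith [h2]

lemma perp_sym (hdim : Module.finrank ℝ V = 3) (hD : IsRotationGroup D)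
    (hr : ∀ v : V, v ≠ 0 → r v ∈ D ∧ (r v) v = v ∧
      ∀ u : V, Perp D u v → (r v) u = -u)
    (hα : ∀ v : V, v ≠ 0 → ∀ w : V, (r v) w + w = α v w • v)
    {u v : V} (hu : u ≠ 0) (hv : v ≠ 0) (h : α v u = 0) : α u v = 0 := by
  have hrvu : (r v) u = -u := by rw [rr_apply hr hα hv, h, zero_smul, zero_sub]
  have hcomm : ∀ z : V, (r u) ((r v) z) = (r v) ((r u) z) := by
    intro z
    have h1 := r_conj hdim hD hr hα (hr v hv).1 hu z
    rw [hrvu] at h1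
    have h2 : (r (-u)) ((r v) z) = (r u) ((r v) z) := by
      have := r_smul_eq hdim hD hr hα (c := -1) (by norm_num) hu ((r v) z)
      rw [neg_one_smul] at this
      exact this
    rw [← h2, h1]
  have h3 := hcomm v
  rw [(hr v hv).2.1] at h3
  rw [rr_apply hr hα hu v, map_sub, map_smul, (hr v hv).2.1] at h3
  rw [hrvu] at h3
  have h4 : α u v • u = α u v • (-u) := sub_left_inj.mp h3
  have h5 : (α u v) • u = (-(α u v)) • u := by rw [h4, smul_neg, neg_smul]
  have h6 := smul_cancel hu h5
  linarith


lemma exists_indep (hdim : Module.finrank ℝ V = 3) {a : V} (ha : a ≠ 0) :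
    ∃ y : V, LinearIndependent ℝ ![a, y] := by
  haveI : FiniteDimensional ℝ V := FiniteDimensional.of_finrank_pos (by rw [hdim]; norm_num)
  by_cases hall : ∀ y : V, y ∈ Submodule.span ℝ {a}
  · have htop : (⊤ : Submodule ℝ V) = Submodule.span ℝ {a} :=
      le_antisymm (fun y _ => hall y) le_top
    have h1 : Module.finrank ℝ (⊤ : Submodule ℝ V) = 1 := by
      rw [htop, finrank_span_singleton ha]
    rw [finrank_top, hdim] at h1
    norm_num at h1
  · push_neg at hall
    obtain ⟨y, hy⟩ := hall
    refine ⟨y, li_pair_symm ?_⟩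
    rw [linearIndependent_fin2]
    simp only [Matrix.cons_val_one, Matrix.head_cons, Matrix.cons_val_zero]
    exact ⟨ha, fun c hc => hy (hc ▸ Submodule.mem_span_singleton.mpr ⟨c, rfl⟩)⟩

section NFacts

variable {x₀ : V} {l : Set V} {N : V → ℝ}

lemma x0_mem_l (hl : l = {y : V | ∃ d : V ≃ₗ[ℝ] V, d ∈ D ∧ d x₀ = y}) : x₀ ∈ l := by
  rw [hl]; exact ⟨1, one_mem D, rfl⟩

lemma l_ne_zero (hx₀ : x₀ ≠ 0)
    (hl : l = {y : V | ∃ d : V ≃ₗ[ℝ] V, d ∈ D ∧ d x₀ = y}) {y : V} (hy : y ∈ l) : y ≠ 0 := by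
  rw [hl] at hy
  obtain ⟨d, -, rfl⟩ := hy
  exact fun h => hx₀ (d.map_eq_zero_iff.mp h)

lemma l_mem_map (hl : l = {y : V | ∃ d : V ≃ₗ[ℝ] V, d ∈ D ∧ d x₀ = y})
    {y : V} (hy : y ∈ l) {g : V ≃ₗ[ℝ] V} (hg : g ∈ D) : g y ∈ l := by
  rw [hl] at hy ⊢
  obtain ⟨d, hd, rfl⟩ := hy
  exact ⟨g * d, mul_mem hg hd, rfl⟩

lemma N_one_of_l (hN : ∀ c : ℝ, 0 ≤ c → ∀ u ∈ l, N (c • u) = c) {y : V} (hy : y ∈ l) :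
    N y = 1 := by
  have := hN 1 zero_le_one y hy
  rwa [one_smul] at this

lemma N_zero' (hl : l = {y : V | ∃ d : V ≃ₗ[ℝ] V, d ∈ D ∧ d x₀ = y})
    (hN : ∀ c : ℝ, 0 ≤ c → ∀ u ∈ l, N (c • u) = c) : N 0 = 0 := by
  have := hN 0 le_rfl x₀ (x0_mem_l hl)
  rwa [zero_smul] at this

lemma N_repr (hdim : Module.finrank ℝ V = 3) (hD : IsRotationGroup D) (hx₀ : x₀ ≠ 0)
    (hl : l = {y : V | ∃ d : V ≃ₗ[ℝ] V, d ∈ D ∧ d x₀ = y})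
    (hN : ∀ c : ℝ, 0 ≤ c → ∀ u ∈ l, N (c • u) = c)
    {x : V} (hx : x ≠ 0) : ∃ c : ℝ, 0 < c ∧ ∃ u' ∈ l, x = c • u' ∧ N x = c := by
  obtain ⟨y, hy⟩ := exists_indep hdim hx₀
  obtain ⟨z, hz⟩ := exists_indep hdim hx
  obtain ⟨d, ⟨hdD, -, hdray⟩, -⟩ := hD x₀ y x z hy hz
  have hdx : d x₀ ∈ Ray' x := by
    rw [← hdray]
    exact ⟨x₀, mem_ray_self x₀, rfl⟩
  obtain ⟨c', hc', hcx⟩ := hdx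
  have hc'0 : c' ≠ 0 := by
    intro h
    rw [h, zero_smul] at hcx
    exact hx₀ (d.map_eq_zero_iff.mp hcx)
  have hc'pos : 0 < c' := lt_of_le_of_ne hc' (Ne.symm hc'0)
  have hul : d x₀ ∈ l := by rw [hl]; exact ⟨d, hdD, rfl⟩
  have hxe : x = c'⁻¹ • d x₀ := by rw [hcx, inv_smul_smul₀ hc'0]
  refine ⟨c'⁻¹, by positivity, d x₀, hul, hxe, ?_⟩
  rw [hxe]
  exact hN c'⁻¹ (by positivity) _ hul

lemma N_pos (hdim : Module.finrank ℝ V = 3) (hD : IsRotationGroup D) (hx₀ : x₀ ≠ 0)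
    (hl : l = {y : V | ∃ d : V ≃ₗ[ℝ] V, d ∈ D ∧ d x₀ = y})
    (hN : ∀ c : ℝ, 0 ≤ c → ∀ u ∈ l, N (c • u) = c)
    {x : V} (hx : x ≠ 0) : 0 < N x := by
  obtain ⟨c, hc, -, -, -, hNx⟩ := N_repr hdim hD hx₀ hl hN hx
  rwa [hNx]

lemma N_smul' (hdim : Module.finrank ℝ V = 3) (hD : IsRotationGroup D) (hx₀ : x₀ ≠ 0)
    (hl : l = {y : V | ∃ d : V ≃ₗ[ℝ] V, d ∈ D ∧ d x₀ = y})
    (hN : ∀ c : ℝ, 0 ≤ c → ∀ u ∈ l, N (c • u) = c)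
    {c : ℝ} (hc : 0 ≤ c) (x : V) : N (c • x) = c * N x := by
  by_cases hx : x = 0
  · rw [hx, smul_zero, N_zero' hl hN, mul_zero]
  · obtain ⟨c₀, hc₀, u', hu', hxe, hNx⟩ := N_repr hdim hD hx₀ hl hN hx
    rw [hxe, smul_smul, hN (c * c₀) (by positivity) u' hu', ← hxe, hNx]

lemma N_D_inv (hdim : Module.finrank ℝ V = 3) (hD : IsRotationGroup D) (hx₀ : x₀ ≠ 0)
    (hl : l = {y : V | ∃ d : V ≃ₗ[ℝ] V, d ∈ D ∧ d x₀ = y})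
    (hN : ∀ c : ℝ, 0 ≤ c → ∀ u ∈ l, N (c • u) = c)
    {g : V ≃ₗ[ℝ] V} (hg : g ∈ D) (x : V) : N (g x) = N x := by
  by_cases hx : x = 0
  · rw [hx, map_zero]
  · obtain ⟨c₀, hc₀, u', hu', hxe, hNx⟩ := N_repr hdim hD hx₀ hl hN hx
    rw [hxe, map_smul, hN c₀ hc₀.le _ (l_mem_map hl hu' hg), ← hxe, hNx]

lemma N_neg' (hdim : Module.finrank ℝ V = 3) (hD : IsRotationGroup D)
    (hr : ∀ v : V, v ≠ 0 → r v ∈ D ∧ (r v) v = v ∧ ∀ u : V, Perp D u v → (r v) u = -u)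
    (hα : ∀ v : V, v ≠ 0 → ∀ w : V, (r v) w + w = α v w • v)
    (hx₀ : x₀ ≠ 0)
    (hl : l = {y : V | ∃ d : V ≃ₗ[ℝ] V, d ∈ D ∧ d x₀ = y})
    (hN : ∀ c : ℝ, 0 ≤ c → ∀ u ∈ l, N (c • u) = c)
    (x : V) : N (-x) = N x := by
  by_cases hx : x = 0
  · rw [hx, neg_zero]
  · obtain ⟨c₀, hc₀, u', hu', hxe, hNx⟩ := N_repr hdim hD hx₀ hl hN hx
    have hu'0 : u' ≠ 0 := l_ne_zero hx₀ hl hu'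
    obtain ⟨u₂, hu₂0, hu₂k⟩ := exists_ker_ne_zero hdim (α u')
    have h1 : α u₂ u' = 0 := perp_sym hdim hD hr hα hu₂0 hu'0 hu₂k
    have h2 : (r u₂) u' = -u' := by rw [rr_apply hr hα hu₂0, h1, zero_smul, zero_sub]
    have h3 : -u' ∈ l := h2 ▸ l_mem_map hl hu' (hr u₂ hu₂0).1
    have hxe' : -x = c₀ • (-u') := by rw [hxe, smul_neg]
    rw [hxe', hN c₀ hc₀.le _ h3, hNx]

end NFacts

lemma ray_smul {c : ℝ} (hc : 0 < c) (a : V) : Ray' (c • a) = Ray' a := by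
  ext x
  constructor
  · rintro ⟨p, hp, rfl⟩
    exact ⟨p * c, by positivity, by rw [mul_smul]⟩
  · rintro ⟨p, hp, rfl⟩
    exact ⟨p / c, by positivity, by match_scalars; field_simp⟩

section Sym

variable {x₀ : V} {l : Set V} {N : V → ℝ}

lemma eigen_fix (hdim : Module.finrank ℝ V = 3) (hD : IsRotationGroup D) (hx₀ : x₀ ≠ 0)
    (hl : l = {y : V | ∃ d : V ≃ₗ[ℝ] V, d ∈ D ∧ d x₀ = y})
    (hN : ∀ c : ℝ, 0 ≤ c → ∀ u ∈ l, N (c • u) = c)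
    {e : V ≃ₗ[ℝ] V} (he : e ∈ D) {v w : V}
    (hvw : LinearIndependent ℝ ![v, w]) {a bb : ℝ} (hb : 0 < bb)
    (hev : e v = w) (hew : e w = bb • v + a • w) :
    ∃ c₀ : ℝ, e (c₀ • v + w) = c₀ • v + w := by
  set s₀ := Real.sqrt (a^2 + 4*bb) with hs₀def
  have hs₀sq : s₀^2 = a^2 + 4*bb := Real.sq_sqrt (by positivity)
  have hs₀nonneg : 0 ≤ s₀ := Real.sqrt_nonneg _
  set lam := (a + s₀)/2 with hlam
  have hlampos : 0 < lam := by
    rw [hlam]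
    nlinarith [hs₀sq, hb, hs₀nonneg, sq_nonneg (s₀ - a), sq_nonneg (s₀ + a)]
  have hlamsq : lam^2 = a*lam + bb := by
    rw [hlam]; linear_combination hs₀sq / 4
  set c₀ := bb/lam with hc₀
  have h1 : lam * c₀ = bb := by rw [hc₀]; field_simp
  have h2 : c₀ + a = lam := by
    rw [hc₀]; field_simp; nlinarith [hlamsq]
  have hm0 : c₀ • v + w ≠ 0 := by
    intro h
    have h0 : c₀ • v + (1:ℝ) • w = 0 := by rw [one_smul]; exact h
    exact one_ne_zero (li_pair_coeffs hvw h0).2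
  have hem : e (c₀ • v + w) = lam • (c₀ • v + w) := by
    rw [map_add, map_smul, hev, hew, smul_add, smul_smul, h1, ← h2]
    module
  have hNe : N (e (c₀ • v + w)) = N (c₀ • v + w) := N_D_inv hdim hD hx₀ hl hN he _
  rw [hem, N_smul' hdim hD hx₀ hl hN hlampos.le] at hNe
  have hNm := N_pos hdim hD hx₀ hl hN hm0
  have hlam1 : lam = 1 := by
    have hz : (lam - 1) * N (c₀ • v + w) = 0 := by linarith [hNe]
    rcases mul_eq_zero.mp hz with h | h
    · linarith
    · linarith
  exact ⟨c₀, by rw [hem, hlam1, one_smul]⟩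

lemma alpha_symm_l (hdim : Module.finrank ℝ V = 3) (hD : IsRotationGroup D)
    (hr : ∀ v : V, v ≠ 0 → r v ∈ D ∧ (r v) v = v ∧ ∀ u : V, Perp D u v → (r v) u = -u)
    (hα : ∀ v : V, v ≠ 0 → ∀ w : V, (r v) w + w = α v w • v)
    (hx₀ : x₀ ≠ 0)
    (hl : l = {y : V | ∃ d : V ≃ₗ[ℝ] V, d ∈ D ∧ d x₀ = y})
    (hN : ∀ c : ℝ, 0 ≤ c → ∀ u ∈ l, N (c • u) = c)
    {v w : V} (hv : v ∈ l) (hw : w ∈ l) : α v w = α w v := by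
  have hv0 : v ≠ 0 := l_ne_zero hx₀ hl hv
  have hw0 : w ≠ 0 := l_ne_zero hx₀ hl hw
  by_cases hvw : LinearIndependent ℝ ![v, w]
  case neg =>
    have hex : ∃ c : ℝ, c • v = w := by
      by_contra hne
      push_neg at hne
      apply hvw
      apply li_pair_symm
      rw [linearIndependent_fin2]
      simp only [Matrix.cons_val_one, Matrix.head_cons, Matrix.cons_val_zero]
      exact ⟨hv0, hne⟩
    obtain ⟨c, hc⟩ := hex
    rcases lt_trichotomy c 0 with hcneg | hczero | hcpos
    · -- c < 0 : w = -v
      have h1 : N w = 1 := N_one_of_l hN hw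
      have h2 : N ((-c) • (-v)) = (-c) * N (-v) :=
        N_smul' hdim hD hx₀ hl hN (by linarith) _
      rw [show (-c) • (-v) = c • v by module, hc] at h2
      rw [N_neg' hdim hD hr hα hx₀ hl hN, N_one_of_l hN hv, mul_one] at h2
      have hc1 : c = -1 := by rw [h1] at h2; linarith
      have hwv : w = -v := by rw [← hc, hc1]; module
      rw [hwv, map_neg, α_self hr hα hv0]
      have := α_smul_eq hdim hD hr hα (c := -1) (by norm_num) hv0 v
      rw [show (-1 : ℝ) • v = -v by module, α_self hr hα hv0] at this
      rw [this]; norm_num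
    · rw [hczero, zero_smul] at hc; exact absurd hc.symm hw0
    · -- c > 0 : w = v
      have h1 : N w = 1 := N_one_of_l hN hw
      have h2 : N (c • v) = c * N v := N_smul' hdim hD hx₀ hl hN hcpos.le _
      rw [hc, N_one_of_l hN hv, mul_one, h1] at h2
      rw [← hc, ← h2, one_smul]
  case pos =>
  set s := α v w with hs
  obtain ⟨u, hu0, hαvu, hαwu⟩ := exists_ker2_ne_zero hdim (α v) (α w)
  have hαuv : α u v = 0 := perp_sym hdim hD hr hα hu0 hv0 hαvu
  have hαuw : α u w = 0 := perp_sym hdim hD hr hα hu0 hw0 hαwu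
  have hαuu : α u u = 2 := α_self hr hα hu0
  have hruv : (r u) v = -v := by rw [rr_apply hr hα hu0, hαuv, zero_smul, zero_sub]
  have hruw : (r u) w = -w := by rw [rr_apply hr hα hu0, hαuw, zero_smul, zero_sub]
  have hruu : (r u) u = u := (hr u hu0).2.1
  have hrvu : (r v) u = -u := by rw [rr_apply hr hα hv0, hαvu, zero_smul, zero_sub]
  have hrvv : (r v) v = v := (hr v hv0).2.1
  have hrvw : (r v) w = s • v - w := by rw [rr_apply hr hα hv0]
  have hIuv : LinearIndependent ℝ ![u, v] := by
    rw [linearIndependent_fin2]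
    simp only [Matrix.cons_val_one, Matrix.head_cons, Matrix.cons_val_zero]
    refine ⟨hv0, fun a ha => ?_⟩
    have h3 : (α u) (a • v) = 2 := by rw [ha]; exact hαuu
    rw [map_smul, smul_eq_mul, hαuv, mul_zero] at h3
    norm_num at h3
  have hIuw : LinearIndependent ℝ ![u, w] := by
    rw [linearIndependent_fin2]
    simp only [Matrix.cons_val_one, Matrix.head_cons, Matrix.cons_val_zero]
    refine ⟨hw0, fun a ha => ?_⟩
    have h3 : (α u) (a • w) = 2 := by rw [ha]; exact hαuu
    rw [map_smul, smul_eq_mul, hαuw, mul_zero] at h3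
    norm_num at h3
  obtain ⟨ρ, ⟨hρD, hρHP, hρRay⟩, hρU⟩ := hD u v u w hIuv hIuw
  have hρu_mem : ρ u ∈ Ray' u := by rw [← hρRay]; exact ⟨u, mem_ray_self u, rfl⟩
  obtain ⟨cu, hcu, hρu_eq⟩ := hρu_mem
  have hcu0 : cu ≠ 0 := by
    intro h; rw [h, zero_smul] at hρu_eq; exact hu0 (ρ.map_eq_zero_iff.mp hρu_eq)
  have hcupos : 0 < cu := lt_of_le_of_ne hcu (Ne.symm hcu0)
  have hρv_mem : ρ v ∈ HalfPlane u w := by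
    rw [← hρHP]; exact ⟨v, ⟨0, 1, zero_le_one, by module⟩, rfl⟩
  obtain ⟨p, q, hq, hρv_eq⟩ := hρv_mem
  have hq0 : q ≠ 0 := by
    intro h
    rw [h, zero_smul, add_zero] at hρv_eq
    have hinj : ρ v = ρ ((p / cu) • u) := by
      rw [map_smul, hρu_eq, smul_smul, div_mul_cancel₀ p hcu0, hρv_eq]
    have hv_eq : v = (p / cu) • u := ρ.injective hinj
    have h0 : (-(p/cu)) • u + (1:ℝ) • v = 0 := by rw [one_smul, hv_eq]; module
    exact one_ne_zero (li_pair_coeffs hIuv h0).2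
  have hqpos : 0 < q := lt_of_le_of_ne hq (Ne.symm hq0)
  set Λ : V ≃ₗ[ℝ] V := r u * ρ * r u with hΛdef
  have hΛapp : ∀ z : V, Λ z = (r u) (ρ ((r u) z)) := fun z => by rw [hΛdef]; rfl
  have hΛD : Λ ∈ D := by
    rw [hΛdef]; exact mul_mem (mul_mem (hr u hu0).1 hρD) (hr u hu0).1
  have hΛu : Λ u = cu • u := by rw [hΛapp, hruu, hρu_eq, map_smul, hruu]
  have hΛv : Λ v = (-p) • u + q • w := by
    rw [hΛapp, hruv, map_neg, hρv_eq, map_neg, map_add, map_smul, map_smul, hruu, hruw]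
    module
  have hΛHP : ⇑Λ '' HalfPlane u v = HalfPlane u w := by
    rw [image_halfPlane, hΛu, hΛv, halfPlane_smul_left hcu0]
    rw [show (-p) • u + q • w = q • w + (-p) • u from by module]
    rw [halfPlane_add_smul, halfPlane_smul_right hqpos]
  have hΛRay : ⇑Λ '' Ray' u = Ray' u := by
    rw [image_ray, hΛu, ray_smul hcupos]
  have hΛeq : Λ = ρ := hρU Λ ⟨hΛD, hΛHP, hΛRay⟩
  have hcomm : ∀ z : V, (r u) (ρ ((r u) z)) = ρ z := fun z => by rw [← hΛapp z, hΛeq]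
  -- p = 0
  have hcv := hcomm v
  rw [hruv, map_neg, map_neg, hρv_eq, map_add, map_smul, map_smul, hruu, hruw] at hcv
  have hcv' : (-p) • u + q • w = p • u + q • w := by rw [← hcv]; module
  have hp0 : p = 0 := by linarith [(li_pair_eq_coeffs hIuw hcv').1]
  -- ρ v = w
  have hρveq2 : ρ v = q • w := by rw [hρv_eq, hp0, zero_smul, zero_add]
  have hq1 : q = 1 := by
    have h1 : N (ρ v) = 1 := N_one_of_l hN (l_mem_map hl hv hρD)
    rw [hρveq2, N_smul' hdim hD hx₀ hl hN hq, N_one_of_l hN hw, mul_one] at h1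
    exact h1
  have hρv : ρ v = w := by rw [hρveq2, hq1, one_smul]
  -- ρ u = u
  have hρu : ρ u = u := by
    have h2 : N (ρ u) = N u := N_D_inv hdim hD hx₀ hl hN hρD u
    rw [hρu_eq, N_smul' hdim hD hx₀ hl hN hcu] at h2
    have h3 : cu = 1 := by
      have := N_pos hdim hD hx₀ hl hN hu0
      have h4 : (cu - 1) * N u = 0 := by linarith
      rcases mul_eq_zero.mp h4 with h | h
      · linarith
      · linarith
    rw [hρu_eq, h3, one_smul]
  -- α u (ρ w) = 0
  have hαuρw : α u (ρ w) = 0 := by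
    have hcw := hcomm w
    rw [hruw, map_neg, map_neg] at hcw
    have h3 : (r u) (ρ w) = -(ρ w) := neg_eq_iff_eq_neg.mp hcw
    rw [rr_apply hr hα hu0] at h3
    have h4 : α u (ρ w) • u = 0 := by
      have h5 := sub_eq_iff_eq_add.mp h3
      rw [neg_add_cancel] at h5
      exact h5
    rcases smul_eq_zero.mp h4 with h | h
    · exact h
    · exact absurd h hu0
  -- ρ w = x • v + y • w
  haveI : FiniteDimensional ℝ V := FiniteDimensional.of_finrank_pos (by rw [hdim]; norm_num)
  have hker_span : ∀ z : V, α u z = 0 → ∃ xc yc : ℝ, z = xc • v + yc • w := by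
    intro z hz
    have hPle : Submodule.span ℝ (Set.range ![v, w]) ≤ LinearMap.ker (α u) := by
      rw [Submodule.span_le]
      rintro t ⟨i, rfl⟩
      fin_cases i
      · simpa [LinearMap.mem_ker] using hαuv
      · simpa [LinearMap.mem_ker] using hαuw
    have hrange : LinearMap.range (α u) = ⊤ := by
      rw [LinearMap.range_eq_top]
      intro t
      exact ⟨(t/2) • u, by rw [map_smul, smul_eq_mul, hαuu]; ring⟩
    have hfinK : Module.finrank ℝ (LinearMap.ker (α u)) = 2 := by
      have h₁ := LinearMap.finrank_range_add_finrank_ker (α u)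
      rw [hrange, finrank_top, Module.finrank_self, hdim] at h₁
      omega
    have hfinP : Module.finrank ℝ (Submodule.span ℝ (Set.range ![v, w])) = 2 := by
      rw [finrank_span_eq_card hvw]
      simp
    have hPK : Submodule.span ℝ (Set.range ![v, w]) = LinearMap.ker (α u) :=
      Submodule.eq_of_le_of_finrank_le hPle (by rw [hfinK, hfinP])
    have hzP : z ∈ Submodule.span ℝ (Set.range ![v, w]) := by
      rw [hPK]; exact LinearMap.mem_ker.mpr hz
    rw [Submodule.mem_span_range_iff_exists_fun] at hzP
    obtain ⟨cf, hcf⟩ := hzP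
    refine ⟨cf 0, cf 1, ?_⟩
    rw [← hcf, Fin.sum_univ_two]
    simp
  obtain ⟨x, y, hρw⟩ := hker_span (ρ w) hαuρw
  have hx0 : x ≠ 0 := by
    intro h
    rw [h, zero_smul, zero_add] at hρw
    have hinj2 : ρ w = ρ (y • v) := by rw [map_smul, hρv, hρw]
    have hwv : w = y • v := ρ.injective hinj2
    have h0 : y • v + (-1 : ℝ) • w = 0 := by rw [← hwv]; module
    have := (li_pair_coeffs hvw h0).2
    norm_num at this
  rcases lt_or_gt_of_ne hx0 with hxneg | hxpos
  · -- good case : x < 0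
    set g : V ≃ₗ[ℝ] V := ρ * r v with hgdef
    have hgapp : ∀ z : V, g z = ρ ((r v) z) := fun z => by rw [hgdef]; rfl
    have hgD : g ∈ D := by rw [hgdef]; exact mul_mem hρD (hr v hv0).1
    have hgv : g v = w := by rw [hgapp, hrvv, hρv]
    have hgw : g w = (-x) • v + (s - y) • w := by
      rw [hgapp, hrvw, map_sub, map_smul, hρv, hρw]
      module
    obtain ⟨c₀, hfix⟩ := eigen_fix hdim hD hx₀ hl hN hgD hvw (by linarith : (0:ℝ) < -x) hgv hgw
    have hm0 : c₀ • v + w ≠ 0 := by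
      intro h
      have h0 : c₀ • v + (1:ℝ) • w = 0 := by rw [one_smul]; exact h
      exact one_ne_zero (li_pair_coeffs hvw h0).2
    obtain ⟨cm, hcm, u₁, hu₁l, hmeq, -⟩ := N_repr hdim hD hx₀ hl hN hm0
    have hu₁0 : u₁ ≠ 0 := l_ne_zero hx₀ hl hu₁l
    have hgu₁ : g u₁ = u₁ := by
      have := hfix
      rw [hmeq, map_smul] at this
      exact smul_right_injective V hcm.ne' this
    have hαum : α u (c₀ • v + w) = 0 := by
      rw [map_add, map_smul, hαuv, hαuw, smul_eq_mul, mul_zero, add_zero]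
    have hαuu₁ : α u u₁ = 0 := by
      rw [hmeq, map_smul, smul_eq_mul] at hαum
      rcases mul_eq_zero.mp hαum with h | h
      · exact absurd h hcm.ne'
      · exact h
    have hαu₁u : α u₁ u = 0 := perp_sym hdim hD hr hα hu₁0 hu0 hαuu₁
    have hru₁u : (r u₁) u = -u := by
      rw [rr_apply hr hα hu₁0, hαu₁u, zero_smul, zero_sub]
    have hgu : g u = -u := by rw [hgapp, hrvu, map_neg, hρu]
    have hIu₁u : LinearIndependent ℝ ![u₁, u] := by
      rw [linearIndependent_fin2]
      simp only [Matrix.cons_val_one, Matrix.head_cons, Matrix.cons_val_zero]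
      refine ⟨hu0, fun a ha => ?_⟩
      have h3 : (α u) (a • u) = 0 := by rw [ha]; exact hαuu₁
      rw [map_smul, smul_eq_mul, hαuu] at h3
      have ha0 : a = 0 := by linarith
      rw [ha0, zero_smul] at ha
      exact hu₁0 ha.symm
    have hIu₁nu : LinearIndependent ℝ ![u₁, -u] := li_pair_neg_right hIu₁u
    obtain ⟨e₀, -, he₀⟩ := hD u₁ u u₁ (-u) hIu₁u hIu₁nu
    have hgE : g = e₀ := he₀ g ⟨hgD,
      by rw [image_halfPlane, hgu₁, hgu],
      by rw [image_ray, hgu₁]⟩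
    have hrE : r u₁ = e₀ := he₀ (r u₁) ⟨(hr u₁ hu₁0).1,
      by rw [image_halfPlane, (hr u₁ hu₁0).2.1, hru₁u],
      by rw [image_ray, (hr u₁ hu₁0).2.1]⟩
    have hginv : ∀ z : V, g (g z) = z := by
      intro z
      rw [hgE.trans hrE.symm]
      exact r_invol hr hα hu₁0 z
    have hgw_v : g w = v := by
      have := hginv v
      rw [hgv] at this
      exact this
    have hfin := α_conj hdim hD hr hα hgD hv0 w
    rw [hgv, hgw_v] at hfin
    exact hfin.symm
  · -- contradiction case : x > 0
    obtain ⟨c₀, hfix⟩ := eigen_fix hdim hD hx₀ hl hN hρD hvw hxpos hρv hρw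
    have hm0 : c₀ • v + w ≠ 0 := by
      intro h
      have h0 : c₀ • v + (1:ℝ) • w = 0 := by rw [one_smul]; exact h
      exact one_ne_zero (li_pair_coeffs hvw h0).2
    obtain ⟨cm, hcm, u₁, hu₁l, hmeq, -⟩ := N_repr hdim hD hx₀ hl hN hm0
    have hu₁0 : u₁ ≠ 0 := l_ne_zero hx₀ hl hu₁l
    have hρu₁ : ρ u₁ = u₁ := by
      have := hfix
      rw [hmeq, map_smul] at this
      exact smul_right_injective V hcm.ne' this
    have hαum : α u (c₀ • v + w) = 0 := by
      rw [map_add, map_smul, hαuv, hαuw, smul_eq_mul, mul_zero, add_zero]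
    have hαuu₁ : α u u₁ = 0 := by
      rw [hmeq, map_smul, smul_eq_mul] at hαum
      rcases mul_eq_zero.mp hαum with h | h
      · exact absurd h hcm.ne'
      · exact h
    have hIuu₁ : LinearIndependent ℝ ![u, u₁] := by
      rw [linearIndependent_fin2]
      simp only [Matrix.cons_val_one, Matrix.head_cons, Matrix.cons_val_zero]
      refine ⟨hu₁0, fun a ha => ?_⟩
      have h3 : (α u) (a • u₁) = 2 := by rw [ha]; exact hαuu
      rw [map_smul, smul_eq_mul, hαuu₁, mul_zero] at h3
      norm_num at h3
    obtain ⟨e₀, -, he₀⟩ := hD u u₁ u u₁ hIuu₁ hIuu₁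
    have hρE : ρ = e₀ := he₀ ρ ⟨hρD,
      by rw [image_halfPlane, hρu, hρu₁],
      by rw [image_ray, hρu]⟩
    have h1E : (1 : V ≃ₗ[ℝ] V) = e₀ := he₀ 1 ⟨one_mem D,
      by rw [show ⇑(1 : V ≃ₗ[ℝ] V) = id from rfl, Set.image_id],
      by rw [show ⇑(1 : V ≃ₗ[ℝ] V) = id from rfl, Set.image_id]⟩
    have hρ1 : ρ = 1 := hρE.trans h1E.symm
    have : v = w := by rw [← hρv, hρ1]; rfl
    have h0 : (1:ℝ) • v + (-1 : ℝ) • w = 0 := by rw [this]; module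
    exact absurd (li_pair_coeffs hvw h0).1 one_ne_zero

end Sym

end Main

theorem stmt13 {V : Type*} [AddCommGroup V] [Module ℝ V]
    (hdim : Module.finrank ℝ V = 3)
    (D : Subgroup (V ≃ₗ[ℝ] V)) (hD : IsRotationGroup D)
    (r : V → (V ≃ₗ[ℝ] V))
    (hr : ∀ v : V, v ≠ 0 → r v ∈ D ∧ (r v) v = v ∧
      ∀ u : V, Perp D u v → (r v) u = -u)
    (α : V → (V →ₗ[ℝ] ℝ))
    (hα : ∀ v : V, v ≠ 0 → ∀ w : V, (r v) w + w = α v w • v)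
    (x₀ : V) (hx₀ : x₀ ≠ 0)
    (l : Set V) (hl : l = {y : V | ∃ d : V ≃ₗ[ℝ] V, d ∈ D ∧ d x₀ = y})
    (N : V → ℝ) (hN : ∀ c : ℝ, 0 ≤ c → ∀ u ∈ l, N (c • u) = c)
    (b : V → V → ℝ)
    (hb : ∀ v w : V, v ≠ 0 → b v w = (N v) ^ 2 * α v w / 2)
    (hb0 : ∀ w : V, b 0 w = 0) :
    (∀ v : V, b v v = (N v) ^ 2) ∧
    (∀ v w : V, b v w = b w v) ∧
    (∀ v w w' : V, b v (w + w') = b v w + b v w') ∧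
    (∀ (c : ℝ) (v w : V), b v (c • w) = c * b v w) ∧
    (∀ v : V, v ≠ 0 → 0 < b v v) ∧
    (∀ d : V ≃ₗ[ℝ] V, d ∈ D → ∀ v w : V, b (d v) (d w) = b v w) := by
  have hNzero : N 0 = 0 := N_zero' hl hN
  have part1 : ∀ v : V, b v v = (N v) ^ 2 := by
    intro v
    by_cases hv : v = 0
    · rw [hv, hb0 0, hNzero]; norm_num
    · rw [hb v v hv, α_self hr hα hv]; ring
  have part3 : ∀ v w w' : V, b v (w + w') = b v w + b v w' := by
    intro v w w'
    by_cases hv : v = 0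
    · rw [hv, hb0, hb0, hb0]; ring
    · rw [hb v _ hv, hb v _ hv, hb v _ hv, map_add]; ring
  have part4 : ∀ (c : ℝ) (v w : V), b v (c • w) = c * b v w := by
    intro c v w
    by_cases hv : v = 0
    · rw [hv, hb0, hb0]; ring
    · rw [hb v _ hv, hb v _ hv, map_smul, smul_eq_mul]; ring
  have part5 : ∀ v : V, v ≠ 0 → 0 < b v v := by
    intro v hv
    rw [part1]
    exact pow_pos (N_pos hdim hD hx₀ hl hN hv) 2
  have part6 : ∀ d : V ≃ₗ[ℝ] V, d ∈ D → ∀ v w : V, b (d v) (d w) = b v w := by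
    intro d hd v w
    by_cases hv : v = 0
    · rw [hv, map_zero, hb0, hb0]
    · have hdv : d v ≠ 0 := fun h => hv (d.map_eq_zero_iff.mp h)
      rw [hb (d v) (d w) hdv, hb v w hv, N_D_inv hdim hD hx₀ hl hN hd,
        α_conj hdim hD hr hα hd hv]
  have part2 : ∀ v w : V, b v w = b w v := by
    intro v w
    by_cases hv : v = 0
    · rw [hv, hb0]
      by_cases hw : w = 0
      · rw [hw, hb0]
      · rw [hb w 0 hw, map_zero]; ring
    · by_cases hw : w = 0
      · rw [hw, hb0, hb v 0 hv, map_zero]; ring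
      · obtain ⟨c, hc, v1, hv1l, hveq, hNv⟩ := N_repr hdim hD hx₀ hl hN hv
        obtain ⟨e, he, w1, hw1l, hweq, hNw⟩ := N_repr hdim hD hx₀ hl hN hw
        have hv10 : v1 ≠ 0 := l_ne_zero hx₀ hl hv1l
        have hw10 : w1 ≠ 0 := l_ne_zero hx₀ hl hw1l
        have h1 : α v w = c⁻¹ * (e * α v1 w1) := by
          rw [hveq, α_smul_eq hdim hD hr hα hc.ne' hv10]
          rw [hweq, map_smul, smul_eq_mul]
        have h2 : α w v = e⁻¹ * (c * α w1 v1) := by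
          rw [hweq, α_smul_eq hdim hD hr hα he.ne' hw10]
          rw [hveq, map_smul, smul_eq_mul]
        rw [hb v w hv, hb w v hw, hNv, hNw, h1, h2,
          alpha_symm_l hdim hD hr hα hx₀ hl hN hv1l hw1l]
        field_simp
  exact ⟨part1, part2, part3, part4, part5, part6⟩
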